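/- arXiv:2305.12274 — 12 statements merged into one kernel-verified Lean document; each statement's English description precedes it below -/
import Mathlib

section
/- With λ* := (Σ_{i=1}^{k*} δᵢ - y)/k*, where k* is the largest k ∈ {1,...,n} with Σ_{i=1}^k (δᵢ - δ_k) < y, we have δ_{k*} > λ* and (if k* < n) δ_{k*+1} ≤ λ*. Consequently the number of indices i with δᵢ > λ* equals k* (using that δ is nonincreasing). -/
open Finset

/-- With `λ* = (∑_{i=1}^{k*} δᵢ - y)/k*` where `k*` is the largest
`k ∈ {1,...,n}` with `∑_{i=1}^k (δᵢ - δ_k) < y`, we have `δ_{k*} > λ*`, and if `k* < n`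
then `δ_{k*+1} ≤ λ*`; consequently the number of indices `i ∈ {1,...,n}` with `δᵢ > λ*`
equals `k*`. -/
theorem stmt1 (n : ℕ) (hn : 1 ≤ n) (y : ℝ) (hy : 0 < y) (δ : ℕ → ℝ)
    (hδ : ∀ i j, 1 ≤ i → i ≤ j → j ≤ n → δ j ≤ δ i)
    (kstar : ℕ)
    (hk : (kstar ∈ Finset.Icc 1 n ∧ ∑ i ∈ Finset.Icc 1 kstar, (δ i - δ kstar) < y) ∧
      ∀ j, (j ∈ Finset.Icc 1 n ∧ ∑ i ∈ Finset.Icc 1 j, (δ i - δ j) < y) → j ≤ kstar)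
    (lstar : ℝ) (hl : lstar = ((∑ i ∈ Finset.Icc 1 kstar, δ i) - y) / kstar) :
    lstar < δ kstar ∧ (kstar < n → δ (kstar + 1) ≤ lstar) ∧
    ((Finset.Icc 1 n).filter (fun i => lstar < δ i)).card = kstar := by
  obtain ⟨⟨hkmem, hksum⟩, hkmax⟩ := hk
  rw [Finset.mem_Icc] at hkmem
  obtain ⟨hk1, hkn⟩ := hkmem
  have hkpos : (0:ℝ) < kstar := by exact_mod_cast hk1
  have hcard : (Finset.Icc 1 kstar).card = kstar := by
    rw [Nat.card_Icc]; omega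
  have hsum : ∑ i ∈ Finset.Icc 1 kstar, (δ i - δ kstar)
      = (∑ i ∈ Finset.Icc 1 kstar, δ i) - kstar * δ kstar := by
    rw [Finset.sum_sub_distrib, Finset.sum_const, hcard, nsmul_eq_mul]
  have h1 : lstar < δ kstar := by
    rw [hl, div_lt_iff₀ hkpos]
    rw [hsum] at hksum
    nlinarith
  have h2 : kstar < n → δ (kstar + 1) ≤ lstar := by
    intro hlt
    have hfail : ¬ (∑ i ∈ Finset.Icc 1 (kstar+1), (δ i - δ (kstar+1)) < y) := by
      intro h
      have := hkmax (kstar+1) ⟨Finset.mem_Icc.mpr ⟨by omega, by omega⟩, h⟩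
      omega
    push_neg at hfail
    have hsum2 : ∑ i ∈ Finset.Icc 1 (kstar+1), (δ i - δ (kstar+1))
        = (∑ i ∈ Finset.Icc 1 kstar, δ i) - kstar * δ (kstar+1) := by
      rw [Finset.sum_Icc_succ_top (by omega)]
      rw [Finset.sum_sub_distrib, Finset.sum_const, hcard, nsmul_eq_mul]
      ring
    rw [hsum2] at hfail
    rw [hl, le_div_iff₀ hkpos]
    nlinarith
  refine ⟨h1, h2, ?_⟩
  have hfilter : (Finset.Icc 1 n).filter (fun i => lstar < δ i) = Finset.Icc 1 kstar := by
    ext i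
    simp only [Finset.mem_filter, Finset.mem_Icc]
    constructor
    · rintro ⟨⟨hi1, hin⟩, hli⟩
      refine ⟨hi1, ?_⟩
      by_contra hcon
      push_neg at hcon
      have hklt : kstar < n := by omega
      have : δ i ≤ δ (kstar+1) := hδ (kstar+1) i (by omega) (by omega) hin
      have := h2 hklt
      linarith
    · rintro ⟨hi1, hik⟩
      refine ⟨⟨hi1, by omega⟩, ?_⟩
      have : δ kstar ≤ δ i := hδ i kstar hi1 hik hkn
      linarith
  rw [hfilter, Nat.card_Icc]; omega
end

section
/- The vector y* defined by yᵢ* = max(δᵢ - λ*, 0) satisfies the constraint Σ_{i=1}^n yᵢ* = y, where λ* = (Σ_{i=1}^{k*} δᵢ - y)/k* and k* is the largest k with Σ_{i=1}^k (δᵢ - δ_k) < y. -/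
open Finset

/-- The vector `yᵢ* = max(δᵢ - λ*, 0)` satisfies `∑_{i=1}^n yᵢ* = y`,
where `λ* = (∑_{i=1}^{k*} δᵢ - y)/k*` and `k*` is the largest `k ∈ {1,...,n}` with
`∑_{i=1}^k (δᵢ - δ_k) < y`. -/
theorem stmt2 (n : ℕ) (hn : 1 ≤ n) (y : ℝ) (hy : 0 < y) (δ : ℕ → ℝ)
    (hδ : ∀ i j, 1 ≤ i → i ≤ j → j ≤ n → δ j ≤ δ i)
    (kstar : ℕ)
    (hk : (kstar ∈ Finset.Icc 1 n ∧ ∑ i ∈ Finset.Icc 1 kstar, (δ i - δ kstar) < y) ∧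
      ∀ j, (j ∈ Finset.Icc 1 n ∧ ∑ i ∈ Finset.Icc 1 j, (δ i - δ j) < y) → j ≤ kstar)
    (lstar : ℝ) (hl : lstar = ((∑ i ∈ Finset.Icc 1 kstar, δ i) - y) / kstar) :
    ∑ i ∈ Finset.Icc 1 n, max (δ i - lstar) 0 = y := by
  obtain ⟨⟨hkmem, hklt⟩, hkmax⟩ := hk
  rw [Finset.mem_Icc] at hkmem
  obtain ⟨hk1, hkn⟩ := hkmem
  have hkpos : (0:ℝ) < (kstar : ℝ) := by exact_mod_cast hk1
  set S : ℝ := ∑ i ∈ Finset.Icc 1 kstar, δ i with hS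
  have hcard : (Finset.Icc 1 kstar).card = kstar := by
    rw [Nat.card_Icc]; omega
  have hsum_eq : ∑ i ∈ Finset.Icc 1 kstar, (δ i - δ kstar) = S - kstar * δ kstar := by
    rw [Finset.sum_sub_distrib, Finset.sum_const, hcard, nsmul_eq_mul]
  rw [hsum_eq] at hklt
  -- λ* < δ kstar
  have hlk : lstar < δ kstar := by
    rw [hl, div_lt_iff₀ hkpos]
    nlinarith
  -- for i ≤ kstar, lstar < δ i
  have hhead : ∀ i ∈ Finset.Icc 1 kstar, lstar < δ i := by
    intro i hi
    rw [Finset.mem_Icc] at hi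
    exact lt_of_lt_of_le hlk (hδ i kstar hi.1 hi.2 hkn)
  -- for i > kstar (i ≤ n), δ i ≤ lstar
  have htail : ∀ i ∈ Finset.Ioc kstar n, δ i ≤ lstar := by
    intro i hi
    rw [Finset.mem_Ioc] at hi
    have hkn' : kstar + 1 ≤ n := by omega
    have hfail : ¬ (∑ j ∈ Finset.Icc 1 (kstar+1), (δ j - δ (kstar+1)) < y) := by
      intro hcon
      have := hkmax (kstar+1) ⟨Finset.mem_Icc.mpr ⟨by omega, hkn'⟩, hcon⟩
      omega
    push_neg at hfail
    have hsplit : ∑ j ∈ Finset.Icc 1 (kstar+1), (δ j - δ (kstar+1))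
        = S - kstar * δ (kstar+1) := by
      rw [Finset.sum_Icc_succ_top (by omega : 1 ≤ kstar + 1),
        Finset.sum_sub_distrib, Finset.sum_const, hcard, nsmul_eq_mul]
      ring
    rw [hsplit] at hfail
    have h1 : δ (kstar+1) ≤ lstar := by
      rw [hl, le_div_iff₀ hkpos]
      nlinarith
    exact le_trans (hδ (kstar+1) i (by omega) hi.1 hi.2) h1
  -- split the sum
  have hdecomp : Finset.Icc 1 n = Finset.Icc 1 kstar ∪ Finset.Ioc kstar n := by
    ext x
    simp only [Finset.mem_Icc, Finset.mem_union, Finset.mem_Ioc]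
    omega
  have hdisj : Disjoint (Finset.Icc 1 kstar) (Finset.Ioc kstar n) := by
    rw [Finset.disjoint_left]
    intro a ha hb
    rw [Finset.mem_Icc] at ha
    rw [Finset.mem_Ioc] at hb
    omega
  rw [hdecomp, Finset.sum_union hdisj]
  have htail0 : ∑ i ∈ Finset.Ioc kstar n, max (δ i - lstar) 0 = 0 := by
    apply Finset.sum_eq_zero
    intro i hi
    have := htail i hi
    simp [max_eq_right, sub_nonpos.mpr this]
  have hhead' : ∑ i ∈ Finset.Icc 1 kstar, max (δ i - lstar) 0
      = ∑ i ∈ Finset.Icc 1 kstar, (δ i - lstar) := by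
    apply Finset.sum_congr rfl
    intro i hi
    exact max_eq_left (sub_nonneg.mpr (le_of_lt (hhead i hi)))
  rw [htail0, hhead', Finset.sum_sub_distrib, Finset.sum_const, hcard, nsmul_eq_mul, hl]
  field_simp
  linarith [hS]
end

section
/- The vector y* with yᵢ* = max(δᵢ - λ*, 0) is the unique minimizer of Σ_{i=1}^n (yᵢ - δᵢ)² over all vectors (y₁,...,yₙ) with yᵢ ≥ 0 for all i and Σ_{i=1}^n yᵢ = y. -/
open Finset

/-- The vector `yᵢ* = max(δᵢ - λ*, 0)` is the unique minimizer of
`∑_{i=1}^n (yᵢ - δᵢ)²` over all vectors with `yᵢ ≥ 0` and `∑ yᵢ = y`. -/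
theorem stmt3 (n : ℕ) (hn : 1 ≤ n) (y : ℝ) (hy : 0 < y) (δ : ℕ → ℝ)
    (hδ : ∀ i j, 1 ≤ i → i ≤ j → j ≤ n → δ j ≤ δ i)
    (kstar : ℕ)
    (hk : (kstar ∈ Finset.Icc 1 n ∧ ∑ i ∈ Finset.Icc 1 kstar, (δ i - δ kstar) < y) ∧
      ∀ j, (j ∈ Finset.Icc 1 n ∧ ∑ i ∈ Finset.Icc 1 j, (δ i - δ j) < y) → j ≤ kstar)
    (lstar : ℝ) (hl : lstar = ((∑ i ∈ Finset.Icc 1 kstar, δ i) - y) / kstar)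
    (ystar : ℕ → ℝ) (hystar : ∀ i, ystar i = max (δ i - lstar) 0) :
    ((∀ i ∈ Finset.Icc 1 n, 0 ≤ ystar i) ∧ ∑ i ∈ Finset.Icc 1 n, ystar i = y ∧
      ∀ z : ℕ → ℝ, (∀ i ∈ Finset.Icc 1 n, 0 ≤ z i) → ∑ i ∈ Finset.Icc 1 n, z i = y →
        ∑ i ∈ Finset.Icc 1 n, (ystar i - δ i) ^ 2 ≤ ∑ i ∈ Finset.Icc 1 n, (z i - δ i) ^ 2) ∧
    (∀ z : ℕ → ℝ, (∀ i ∈ Finset.Icc 1 n, 0 ≤ z i) → ∑ i ∈ Finset.Icc 1 n, z i = y →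
      ∑ i ∈ Finset.Icc 1 n, (z i - δ i) ^ 2 = ∑ i ∈ Finset.Icc 1 n, (ystar i - δ i) ^ 2 →
      ∀ i ∈ Finset.Icc 1 n, z i = ystar i) := by
  obtain ⟨⟨hkmem, hklt⟩, hkmax⟩ := hk
  rw [Finset.mem_Icc] at hkmem
  obtain ⟨hk1, hkn⟩ := hkmem
  have hkposR : (0:ℝ) < (kstar : ℝ) := by exact_mod_cast hk1
  have hcard : (Finset.Icc 1 kstar).card = kstar := by simp
  have hSsum : ∑ i ∈ Finset.Icc 1 kstar, (δ i - δ kstar)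
      = (∑ i ∈ Finset.Icc 1 kstar, δ i) - (kstar : ℝ) * δ kstar := by
    rw [Finset.sum_sub_distrib, Finset.sum_const, hcard]
    simp [nsmul_eq_mul]
  rw [hSsum] at hklt
  -- lstar < δ i for i ≤ kstar
  have hlk : ∀ i ∈ Finset.Icc 1 kstar, lstar < δ i := by
    intro i hi
    rw [Finset.mem_Icc] at hi
    have h1 : δ kstar ≤ δ i := hδ i kstar hi.1 hi.2 hkn
    have h2 : lstar < δ kstar := by
      rw [hl, div_lt_iff₀ hkposR]; nlinarith
    linarith
  -- δ i ≤ lstar for kstar < i ≤ n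
  have hδsmall : ∀ i ∈ Finset.Icc (kstar + 1) n, δ i ≤ lstar := by
    intro i hi
    rw [Finset.mem_Icc] at hi
    have hk1n : kstar + 1 ≤ n := le_trans hi.1 hi.2
    have hnot : ¬ (∑ j ∈ Finset.Icc 1 (kstar + 1), (δ j - δ (kstar + 1)) < y) := by
      intro hcon
      have := hkmax (kstar + 1) ⟨Finset.mem_Icc.mpr ⟨Nat.le_add_left 1 kstar, hk1n⟩, hcon⟩
      omega
    push_neg at hnot
    rw [Finset.sum_Icc_succ_top (by omega : 1 ≤ kstar + 1)] at hnot
    have hexp : ∑ j ∈ Finset.Icc 1 kstar, (δ j - δ (kstar + 1))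
        = (∑ j ∈ Finset.Icc 1 kstar, δ j) - (kstar : ℝ) * δ (kstar + 1) := by
      rw [Finset.sum_sub_distrib, Finset.sum_const, hcard]; simp [nsmul_eq_mul]
    rw [hexp] at hnot
    have hmono : δ i ≤ δ (kstar + 1) := hδ (kstar + 1) i (by omega) hi.1 hi.2
    have : δ (kstar + 1) ≤ lstar := by
      rw [hl, le_div_iff₀ hkposR]; nlinarith
    linarith
  have hy1 : ∀ i ∈ Finset.Icc 1 kstar, ystar i = δ i - lstar := by
    intro i hi
    rw [hystar]
    exact max_eq_left (by linarith [hlk i hi])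
  have hy2 : ∀ i ∈ Finset.Icc (kstar + 1) n, ystar i = 0 := by
    intro i hi
    rw [hystar]
    exact max_eq_right (by linarith [hδsmall i hi])
  have hsplit : ∀ f : ℕ → ℝ, ∑ i ∈ Finset.Icc 1 n, f i
      = (∑ i ∈ Finset.Icc 1 kstar, f i) + ∑ i ∈ Finset.Icc (kstar + 1) n, f i := by
    intro f
    have h := Finset.sum_Ioc_consecutive f (Nat.zero_le kstar) hkn
    have h0 : ∀ m : ℕ, Finset.Icc 1 m = Finset.Ioc 0 m := fun m => Finset.Icc_add_one_left_eq_Ioc 0 m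
    rw [h0, h0, Finset.Icc_add_one_left_eq_Ioc, ← h]
  -- sum of ystar
  have hsum : ∑ i ∈ Finset.Icc 1 n, ystar i = y := by
    rw [hsplit, Finset.sum_congr rfl hy1, Finset.sum_congr rfl hy2,
      Finset.sum_sub_distrib, Finset.sum_const, hcard]
    simp only [nsmul_eq_mul, Finset.sum_const_zero, add_zero]
    rw [hl]; field_simp; ring
  have hnonneg : ∀ i ∈ Finset.Icc 1 n, 0 ≤ ystar i := by
    intro i _; rw [hystar]; exact le_max_right _ _
  -- key inequality pieces
  have key : ∀ z : ℕ → ℝ, (∀ i ∈ Finset.Icc 1 n, 0 ≤ z i) →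
      (∑ i ∈ Finset.Icc 1 n, z i = y) →
      0 ≤ ∑ i ∈ Finset.Icc 1 n, (z i - ystar i) * (ystar i - δ i) := by
    intro z hz hzsum
    have hterm : ∀ i ∈ Finset.Icc 1 n,
        -lstar * (z i - ystar i) ≤ (z i - ystar i) * (ystar i - δ i) := by
      intro i hi
      rw [Finset.mem_Icc] at hi
      by_cases hik : i ≤ kstar
      · rw [hy1 i (Finset.mem_Icc.mpr ⟨hi.1, hik⟩)]
        apply le_of_eq; ring
      · have hmem : i ∈ Finset.Icc (kstar + 1) n := Finset.mem_Icc.mpr ⟨by omega, hi.2⟩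
        rw [hy2 i hmem]
        have h1 : 0 ≤ z i := hz i (Finset.mem_Icc.mpr hi)
        have h2 : δ i ≤ lstar := hδsmall i hmem
        nlinarith
    calc (0:ℝ) = ∑ i ∈ Finset.Icc 1 n, -lstar * (z i - ystar i) := by
          rw [← Finset.mul_sum, Finset.sum_sub_distrib, hzsum, hsum]; ring
      _ ≤ _ := Finset.sum_le_sum hterm
  have ident : ∀ z : ℕ → ℝ, ∑ i ∈ Finset.Icc 1 n, (z i - δ i) ^ 2
      = (∑ i ∈ Finset.Icc 1 n, (ystar i - δ i) ^ 2)
        + (∑ i ∈ Finset.Icc 1 n, (z i - ystar i) ^ 2)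
        + 2 * ∑ i ∈ Finset.Icc 1 n, (z i - ystar i) * (ystar i - δ i) := by
    intro z
    rw [Finset.mul_sum, ← Finset.sum_add_distrib, ← Finset.sum_add_distrib]
    apply Finset.sum_congr rfl
    intro i _; ring
  refine ⟨⟨hnonneg, hsum, ?_⟩, ?_⟩
  · intro z hz hzsum
    have h1 := key z hz hzsum
    have h2 : 0 ≤ ∑ i ∈ Finset.Icc 1 n, (z i - ystar i) ^ 2 :=
      Finset.sum_nonneg fun i _ => sq_nonneg _
    have h3 := ident z
    linarith
  · intro z hz hzsum heq i hi
    have h1 := key z hz hzsum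
    have h3 := ident z
    have hsq : ∑ j ∈ Finset.Icc 1 n, (z j - ystar j) ^ 2 = 0 := by
      have h2 : 0 ≤ ∑ j ∈ Finset.Icc 1 n, (z j - ystar j) ^ 2 :=
        Finset.sum_nonneg fun j _ => sq_nonneg _
      linarith
    have := (Finset.sum_eq_zero_iff_of_nonneg fun j _ => sq_nonneg (z j - ystar j)).mp hsq i hi
    have := pow_eq_zero_iff (n := 2) (by norm_num) |>.mp this
    linarith [this]
end

section
/- For the optimal vector yᵢ* = max(δᵢ - λ*, 0), we have yᵢ* > 0 for i ≤ k* and yᵢ* = 0 for i > k*, where k* is the largest k with Σ_{i=1}^k (δᵢ - δ_k) < y and λ* = (Σ_{i=1}^{k*} δᵢ - y)/k*. -/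
open Finset

/-- For `yᵢ* = max(δᵢ - λ*, 0)` we have `yᵢ* > 0` for `1 ≤ i ≤ k*` and
`yᵢ* = 0` for `k* < i ≤ n`. -/
theorem stmt4 (n : ℕ) (hn : 1 ≤ n) (y : ℝ) (hy : 0 < y) (δ : ℕ → ℝ)
    (hδ : ∀ i j, 1 ≤ i → i ≤ j → j ≤ n → δ j ≤ δ i)
    (kstar : ℕ)
    (hk : (kstar ∈ Finset.Icc 1 n ∧ ∑ i ∈ Finset.Icc 1 kstar, (δ i - δ kstar) < y) ∧
      ∀ j, (j ∈ Finset.Icc 1 n ∧ ∑ i ∈ Finset.Icc 1 j, (δ i - δ j) < y) → j ≤ kstar)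
    (lstar : ℝ) (hl : lstar = ((∑ i ∈ Finset.Icc 1 kstar, δ i) - y) / kstar) :
    (∀ i, 1 ≤ i → i ≤ kstar → 0 < max (δ i - lstar) 0) ∧
    (∀ i, kstar < i → i ≤ n → max (δ i - lstar) 0 = 0) := by
  obtain ⟨⟨hmem, hsum⟩, hmax⟩ := hk
  rw [Finset.mem_Icc] at hmem
  obtain ⟨hk1, hkn⟩ := hmem
  have hkpos : (0 : ℝ) < (kstar : ℝ) := by exact_mod_cast hk1
  have hcard : (Finset.Icc 1 kstar).card = kstar := by
    rw [Nat.card_Icc]; omega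
  have hsum' : (∑ i ∈ Finset.Icc 1 kstar, δ i) - kstar * δ kstar < y := by
    have : ∑ i ∈ Finset.Icc 1 kstar, (δ i - δ kstar)
        = (∑ i ∈ Finset.Icc 1 kstar, δ i) - kstar * δ kstar := by
      rw [Finset.sum_sub_distrib, Finset.sum_const, hcard, nsmul_eq_mul]
    linarith [this ▸ hsum]
  have hllt : lstar < δ kstar := by
    rw [hl, div_lt_iff₀ hkpos]
    linarith
  constructor
  · intro i hi1 hik
    have : δ kstar ≤ δ i := hδ i kstar hi1 hik hkn
    have : 0 < δ i - lstar := by linarith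
    exact lt_max_of_lt_left this
  · intro i hki hin
    have hk1n : kstar + 1 ≤ n := by omega
    have hnot : ¬ ((kstar + 1) ∈ Finset.Icc 1 n ∧
        ∑ j ∈ Finset.Icc 1 (kstar + 1), (δ j - δ (kstar + 1)) < y) := by
      intro h
      have := hmax (kstar + 1) h
      omega
    have hmem' : (kstar + 1) ∈ Finset.Icc 1 n := by
      rw [Finset.mem_Icc]; omega
    have hge : y ≤ ∑ j ∈ Finset.Icc 1 (kstar + 1), (δ j - δ (kstar + 1)) := by
      by_contra h
      exact hnot ⟨hmem', by linarith⟩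
    have hsplit : ∑ j ∈ Finset.Icc 1 (kstar + 1), (δ j - δ (kstar + 1))
        = (∑ j ∈ Finset.Icc 1 kstar, δ j) - kstar * δ (kstar + 1) := by
      rw [Finset.sum_sub_distrib, Finset.sum_const, Nat.card_Icc,
        Finset.sum_Icc_succ_top (by omega : 1 ≤ kstar + 1)]
      have : kstar + 1 + 1 - 1 = kstar + 1 := by omega
      rw [this, nsmul_eq_mul]
      push_cast
      ring
    rw [hsplit] at hge
    have hle : δ (kstar + 1) ≤ lstar := by
      rw [hl, le_div_iff₀ hkpos]
      linarith
    have : δ i ≤ δ (kstar + 1) := hδ (kstar + 1) i (by omega) (by omega) hin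
    have : δ i - lstar ≤ 0 := by linarith
    exact max_eq_right this
end

section
/- If y > Σ_{i=1}^n max(δᵢ, 0), then a nonnegative vector y* summing to y minimizes Σ_{i=1}^n |yᵢ* - δᵢ| if and only if yᵢ* = max(δᵢ, 0) + εᵢ for some εᵢ ≥ 0 with Σ_{i=1}^n εᵢ = y - Σ_{i=1}^n max(δᵢ, 0). -/
open Finset

/-- If `y > ∑ max(δᵢ,0)`, then a nonnegative vector `y*` summing to `y`
minimizes `∑ |yᵢ* - δᵢ|` iff `yᵢ* = max(δᵢ,0) + εᵢ` for some `εᵢ ≥ 0` summing to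
`y - ∑ max(δᵢ,0)`. -/
theorem stmt7 (n : ℕ) (y : ℝ) (hy : 0 < y) (δ : ℕ → ℝ)
    (h : ∑ i ∈ Finset.Icc 1 n, max (δ i) 0 < y)
    (ystar : ℕ → ℝ) (hpos : ∀ i ∈ Finset.Icc 1 n, 0 ≤ ystar i)
    (hsum : ∑ i ∈ Finset.Icc 1 n, ystar i = y) :
    (∀ z : ℕ → ℝ, (∀ i ∈ Finset.Icc 1 n, 0 ≤ z i) → ∑ i ∈ Finset.Icc 1 n, z i = y →
        ∑ i ∈ Finset.Icc 1 n, |ystar i - δ i| ≤ ∑ i ∈ Finset.Icc 1 n, |z i - δ i|) ↔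
    ∃ ε : ℕ → ℝ, (∀ i ∈ Finset.Icc 1 n, 0 ≤ ε i) ∧
      ∑ i ∈ Finset.Icc 1 n, ε i = y - ∑ i ∈ Finset.Icc 1 n, max (δ i) 0 ∧
      ∀ i ∈ Finset.Icc 1 n, ystar i = max (δ i) 0 + ε i := by
  have hn : 1 ≤ n := by
    by_contra hn
    push_neg at hn
    interval_cases n
    · simp at hsum; linarith
  have hcard : (Finset.Icc 1 n).card = n := by
    rw [Nat.card_Icc]; omega
  have hS : (0:ℝ) < y - ∑ i ∈ Finset.Icc 1 n, max (δ i) 0 := by linarith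
  constructor
  · intro hmin
    set c : ℝ := (y - ∑ i ∈ Finset.Icc 1 n, max (δ i) 0) / n with hc
    have hnpos : (0:ℝ) < n := by exact_mod_cast Nat.pos_of_ne_zero (by omega)
    have hcpos : 0 < c := div_pos hS hnpos
    have hzsum : ∑ i ∈ Finset.Icc 1 n, (max (δ i) 0 + c) = y := by
      rw [Finset.sum_add_distrib, Finset.sum_const, hcard, nsmul_eq_mul, hc]
      field_simp
      ring
    have hzpos : ∀ i ∈ Finset.Icc 1 n, 0 ≤ max (δ i) 0 + c := by
      intro i _
      have : (0:ℝ) ≤ max (δ i) 0 := le_max_right _ _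
      linarith
    have key := hmin (fun i => max (δ i) 0 + c) hzpos hzsum
    have habs : ∀ i ∈ Finset.Icc 1 n, |max (δ i) 0 + c - δ i| = max (δ i) 0 + c - δ i := by
      intro i _
      have h1 : δ i ≤ max (δ i) 0 := le_max_left _ _
      exact abs_of_nonneg (by linarith)
    rw [Finset.sum_congr rfl habs] at key
    have hrhs : ∑ i ∈ Finset.Icc 1 n, (max (δ i) 0 + c - δ i)
        = y - ∑ i ∈ Finset.Icc 1 n, δ i := by
      have : ∀ i, max (δ i) 0 + c - δ i = (max (δ i) 0 + c) - δ i := fun i => by ring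
      rw [Finset.sum_congr rfl (fun i _ => this i), Finset.sum_sub_distrib, hzsum]
    rw [hrhs] at key
    -- lower bound: ∑ |ystar - δ| ≥ ∑ (ystar - δ) = y - ∑ δ
    have hterm : ∀ i ∈ Finset.Icc 1 n, 0 ≤ |ystar i - δ i| - (ystar i - δ i) := by
      intro i _
      have := le_abs_self (ystar i - δ i)
      linarith
    have hsumz : ∑ i ∈ Finset.Icc 1 n, (|ystar i - δ i| - (ystar i - δ i)) = 0 := by
      have h1 : ∑ i ∈ Finset.Icc 1 n, (|ystar i - δ i| - (ystar i - δ i))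
          = ∑ i ∈ Finset.Icc 1 n, |ystar i - δ i| - (y - ∑ i ∈ Finset.Icc 1 n, δ i) := by
        rw [Finset.sum_sub_distrib, Finset.sum_sub_distrib, hsum]
      have h2 : 0 ≤ ∑ i ∈ Finset.Icc 1 n, (|ystar i - δ i| - (ystar i - δ i)) :=
        Finset.sum_nonneg hterm
      linarith
    have heach := (Finset.sum_eq_zero_iff_of_nonneg hterm).mp hsumz
    refine ⟨fun i => ystar i - max (δ i) 0, ?_, ?_, ?_⟩
    · intro i hi
      have hz := heach i hi
      have h1 : δ i ≤ ystar i := by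
        have := le_abs_self (ystar i - δ i)
        have habs0 : |ystar i - δ i| = ystar i - δ i := by linarith
        have := abs_nonneg (ystar i - δ i)
        linarith
      have h2 := hpos i hi
      rcases le_or_gt (δ i) 0 with hd | hd
      · simp [max_eq_right hd]; linarith
      · simp [max_eq_left (le_of_lt hd)]; linarith
    · rw [Finset.sum_sub_distrib, hsum]
    · intro i hi; ring
  · rintro ⟨ε, hεpos, hεsum, hεeq⟩
    intro z hzpos hzsum
    have h1 : ∑ i ∈ Finset.Icc 1 n, |ystar i - δ i| = y - ∑ i ∈ Finset.Icc 1 n, δ i := by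
      have : ∀ i ∈ Finset.Icc 1 n, |ystar i - δ i| = ystar i - δ i := by
        intro i hi
        have h1 : δ i ≤ max (δ i) 0 := le_max_left _ _
        have h2 := hεpos i hi
        rw [hεeq i hi]
        exact abs_of_nonneg (by linarith)
      rw [Finset.sum_congr rfl this, Finset.sum_sub_distrib, hsum]
    have h2 : y - ∑ i ∈ Finset.Icc 1 n, δ i ≤ ∑ i ∈ Finset.Icc 1 n, |z i - δ i| := by
      have : ∑ i ∈ Finset.Icc 1 n, (z i - δ i) ≤ ∑ i ∈ Finset.Icc 1 n, |z i - δ i| :=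
        Finset.sum_le_sum (fun i _ => le_abs_self _)
      rw [Finset.sum_sub_distrib, hzsum] at this
      linarith
    linarith
end

section
/- If 0 < y ≤ Σ_{i=1}^n max(δᵢ, 0), then the minimum value of Σ_{i=1}^n |yᵢ - δᵢ| over nonnegative vectors (y₁,...,yₙ) summing to y equals Σ_{i=1}^n |δᵢ| - y. -/
open Finset

/-- If `0 < y ≤ ∑ max(δᵢ,0)`, the minimum of `∑ |yᵢ - δᵢ|` over nonnegative
vectors summing to `y` equals `∑ |δᵢ| - y`. -/
theorem stmt8 (n : ℕ) (y : ℝ) (hy : 0 < y) (δ : ℕ → ℝ)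
    (h : y ≤ ∑ i ∈ Finset.Icc 1 n, max (δ i) 0) :
    IsLeast {s : ℝ | ∃ z : ℕ → ℝ, (∀ i ∈ Finset.Icc 1 n, 0 ≤ z i) ∧
        ∑ i ∈ Finset.Icc 1 n, z i = y ∧ s = ∑ i ∈ Finset.Icc 1 n, |z i - δ i|}
      ((∑ i ∈ Finset.Icc 1 n, |δ i|) - y) := by
  set S := ∑ i ∈ Finset.Icc 1 n, max (δ i) 0 with hS
  have hSpos : 0 < S := lt_of_lt_of_le hy h
  constructor
  · -- membership: z i = (y/S) * max (δ i) 0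
    refine ⟨fun i => (y / S) * max (δ i) 0, ?_, ?_, ?_⟩
    · intro i _
      exact mul_nonneg (div_nonneg hy.le hSpos.le) (le_max_right _ _)
    · rw [← Finset.mul_sum, ← hS, div_mul_cancel₀ _ hSpos.ne']
    · have ht1 : y / S ≤ 1 := (div_le_one hSpos).2 h
      have ht0 : 0 ≤ y / S := div_nonneg hy.le hSpos.le
      have key : ∀ i, |(y / S) * max (δ i) 0 - δ i| = |δ i| - (y / S) * max (δ i) 0 := by
        intro i
        rcases le_or_gt 0 (δ i) with hd | hd
        · rw [max_eq_left hd, abs_of_nonneg hd, abs_of_nonpos]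
          · ring
          · nlinarith
        · rw [max_eq_right hd.le, mul_zero, zero_sub, abs_neg, sub_zero]
      calc ∑ i ∈ Finset.Icc 1 n, |δ i| - y
          = ∑ i ∈ Finset.Icc 1 n, (|δ i| - (y / S) * max (δ i) 0) := by
            rw [Finset.sum_sub_distrib, ← Finset.mul_sum, ← hS,
              div_mul_cancel₀ _ hSpos.ne']
        _ = ∑ i ∈ Finset.Icc 1 n, |(y / S) * max (δ i) 0 - δ i| := by
            exact Finset.sum_congr rfl fun i _ => (key i).symm
  · -- lower bound
    rintro s ⟨z, hz0, hzsum, rfl⟩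
    have : ∀ i ∈ Finset.Icc 1 n, |δ i| - z i ≤ |z i - δ i| := by
      intro i hi
      have := abs_sub_abs_le_abs_sub (δ i) (z i)
      have h0 := hz0 i hi
      rw [abs_of_nonneg h0, abs_sub_comm] at this
      linarith
    calc (∑ i ∈ Finset.Icc 1 n, |δ i|) - y
        = ∑ i ∈ Finset.Icc 1 n, (|δ i| - z i) := by
          rw [Finset.sum_sub_distrib, hzsum]
      _ ≤ ∑ i ∈ Finset.Icc 1 n, |z i - δ i| := Finset.sum_le_sum this
end

section
/- If 0 < y ≤ Σ_{i=1}^n max(δᵢ, 0), then a nonnegative vector y* summing to y minimizes Σ_{i=1}^n |yᵢ* - δᵢ| if and only if there exist α₁,...,αₙ ∈ [0,1] with Σ_{i=1}^n αᵢ·max(δᵢ,0) = y and yᵢ* = αᵢ·max(δᵢ, 0) for all i. -/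
open Finset

lemma pt1 (d z : ℝ) (hz : 0 ≤ z) : |d| - z ≤ |z - d| := by
  have h1 := abs_sub_abs_le_abs_sub d z
  rw [abs_of_nonneg hz, abs_sub_comm] at h1
  linarith

lemma pt2 (d z : ℝ) (hz : 0 ≤ z) (hle : z ≤ max d 0) : |z - d| = |d| - z := by
  rcases le_or_gt 0 d with hd | hd
  · rw [max_eq_left hd] at hle
    rw [abs_of_nonpos (by linarith), abs_of_nonneg hd]; ring
  · rw [max_eq_right hd.le] at hle
    have hz0 : z = 0 := le_antisymm hle hz
    subst hz0
    rw [zero_sub, abs_neg, sub_zero]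

lemma pt3 (d z : ℝ) (hz : 0 ≤ z) (heq : |z - d| = |d| - z) : z ≤ max d 0 := by
  rcases le_or_gt 0 d with hd | hd
  · rw [abs_of_nonneg hd] at heq
    have h1 : z - d ≤ |z - d| := le_abs_self _
    have : z ≤ d := by linarith
    exact le_max_of_le_left this
  · rw [abs_of_neg hd] at heq
    have h1 : |z - d| = z - d := abs_of_pos (by linarith)
    have : z = 0 := by linarith
    rw [this]
    exact le_max_right d 0

/-- If `0 < y ≤ ∑ max(δᵢ,0)`, then a nonnegative vector `y*` summing to `y`
minimizes `∑ |yᵢ* - δᵢ|` iff `yᵢ* = αᵢ·max(δᵢ,0)` for some `αᵢ ∈ [0,1]` with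
`∑ αᵢ·max(δᵢ,0) = y`. -/
theorem stmt9 (n : ℕ) (y : ℝ) (hy : 0 < y) (δ : ℕ → ℝ)
    (h : y ≤ ∑ i ∈ Finset.Icc 1 n, max (δ i) 0)
    (ystar : ℕ → ℝ) (hpos : ∀ i ∈ Finset.Icc 1 n, 0 ≤ ystar i)
    (hsum : ∑ i ∈ Finset.Icc 1 n, ystar i = y) :
    (∀ z : ℕ → ℝ, (∀ i ∈ Finset.Icc 1 n, 0 ≤ z i) → ∑ i ∈ Finset.Icc 1 n, z i = y →
        ∑ i ∈ Finset.Icc 1 n, |ystar i - δ i| ≤ ∑ i ∈ Finset.Icc 1 n, |z i - δ i|) ↔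
    ∃ α : ℕ → ℝ, (∀ i ∈ Finset.Icc 1 n, α i ∈ Set.Icc (0 : ℝ) 1) ∧
      ∑ i ∈ Finset.Icc 1 n, α i * max (δ i) 0 = y ∧
      ∀ i ∈ Finset.Icc 1 n, ystar i = α i * max (δ i) 0 := by
  set s := Finset.Icc 1 n with hs
  set S : ℝ := ∑ i ∈ s, max (δ i) 0 with hS
  have hSpos : 0 < S := lt_of_lt_of_le hy h
  constructor
  · intro hmin
    -- candidate minimizer z i = (y/S) * max (δ i) 0
    set z : ℕ → ℝ := fun i => (y / S) * max (δ i) 0 with hzdef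
    have hq0 : 0 ≤ y / S := div_nonneg hy.le hSpos.le
    have hq1 : y / S ≤ 1 := (div_le_one hSpos).mpr h
    have hzpos : ∀ i ∈ s, 0 ≤ z i := fun i _ =>
      mul_nonneg hq0 (le_max_right _ _)
    have hzsum : ∑ i ∈ s, z i = y := by
      rw [hzdef, ← Finset.mul_sum, ← hS, div_mul_cancel₀ _ hSpos.ne']
    have hzle : ∀ i ∈ s, z i ≤ max (δ i) 0 := by
      intro i _
      have hm : 0 ≤ max (δ i) 0 := le_max_right _ _
      calc (y / S) * max (δ i) 0 ≤ 1 * max (δ i) 0 := by nlinarith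
        _ = max (δ i) 0 := one_mul _
    have h1 : ∑ i ∈ s, |z i - δ i| = ∑ i ∈ s, |δ i| - y := by
      rw [← hzsum, ← Finset.sum_sub_distrib]
      exact Finset.sum_congr rfl fun i hi => pt2 _ _ (hzpos i hi) (hzle i hi)
    have h2 := hmin z hzpos hzsum
    have h3 : ∑ i ∈ s, (|δ i| - ystar i) ≤ ∑ i ∈ s, |ystar i - δ i| :=
      Finset.sum_le_sum fun i hi => pt1 _ _ (hpos i hi)
    have h4 : ∑ i ∈ s, (|δ i| - ystar i) = ∑ i ∈ s, |δ i| - y := by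
      rw [Finset.sum_sub_distrib, hsum]
    have heq : ∑ i ∈ s, (|δ i| - ystar i) = ∑ i ∈ s, |ystar i - δ i| := by
      rw [h1] at h2; linarith
    have hkey : ∀ i ∈ s, ystar i ≤ max (δ i) 0 := by
      intro i hi
      have hpt := (Finset.sum_eq_sum_iff_of_le
        (fun i hi => pt1 (δ i) (ystar i) (hpos i hi))).mp heq i hi
      exact pt3 _ _ (hpos i hi) hpt.symm
    refine ⟨fun i => if max (δ i) 0 = 0 then 0 else ystar i / max (δ i) 0, ?_, ?_, ?_⟩
    · intro i hi
      by_cases hm : max (δ i) 0 = 0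
      · simp [hm]
      · have hmpos : 0 < max (δ i) 0 := lt_of_le_of_ne (le_max_right _ _) (Ne.symm hm)
        simp only [hm, if_false]
        exact ⟨div_nonneg (hpos i hi) hmpos.le, (div_le_one hmpos).mpr (hkey i hi)⟩
    · have : ∀ i ∈ s, (if max (δ i) 0 = 0 then (0:ℝ) else ystar i / max (δ i) 0)
          * max (δ i) 0 = ystar i := by
        intro i hi
        by_cases hm : max (δ i) 0 = 0
        · have h0 : ystar i = 0 := le_antisymm (hm ▸ hkey i hi) (hpos i hi)
          simp [hm, h0]
        · simp only [hm, if_false]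
          exact div_mul_cancel₀ _ hm
      rw [Finset.sum_congr rfl this, hsum]
    · intro i hi
      by_cases hm : max (δ i) 0 = 0
      · have h0 : ystar i = 0 := le_antisymm (hm ▸ hkey i hi) (hpos i hi)
        simp [hm, h0]
      · simp only [hm, if_false]
        rw [div_mul_cancel₀ _ hm]
  · rintro ⟨α, hα, hαsum, hyeq⟩ z hz hzsum
    have hyle : ∀ i ∈ s, ystar i ≤ max (δ i) 0 := by
      intro i hi
      rw [hyeq i hi]
      have h1 := (hα i hi).2
      have hm : 0 ≤ max (δ i) 0 := le_max_right _ _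
      nlinarith
    have h1 : ∑ i ∈ s, |ystar i - δ i| = ∑ i ∈ s, |δ i| - y := by
      rw [← hsum, ← Finset.sum_sub_distrib]
      exact Finset.sum_congr rfl fun i hi => pt2 _ _ (hpos i hi) (hyle i hi)
    have h2 : ∑ i ∈ s, (|δ i| - z i) ≤ ∑ i ∈ s, |z i - δ i| :=
      Finset.sum_le_sum fun i hi => pt1 _ _ (hz i hi)
    rw [Finset.sum_sub_distrib, hzsum] at h2
    linarith
end

section
/- If 0 < y ≤ Σ_{i=1}^n max(δᵢ, 0) and α := y / Σ_{i=1}^n max(δᵢ, 0), then the vector yᵢ* = α·max(δᵢ, 0) is nonnegative, sums to y, satisfies α ∈ (0,1], and achieves Σ_{i=1}^n |yᵢ* - δᵢ| = Σ_{i=1}^n |δᵢ| - y. -/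
open Finset

/-- If `0 < y ≤ ∑ max(δᵢ,0)` and `α = y / ∑ max(δᵢ,0)`, then
`yᵢ* = α·max(δᵢ,0)` is nonnegative, sums to `y`, `α ∈ (0,1]`, and
`∑ |yᵢ* - δᵢ| = ∑ |δᵢ| - y`. -/
theorem stmt10 (n : ℕ) (y : ℝ) (hy : 0 < y) (δ : ℕ → ℝ)
    (hpos : 0 < ∑ i ∈ Finset.Icc 1 n, max (δ i) 0)
    (h : y ≤ ∑ i ∈ Finset.Icc 1 n, max (δ i) 0)
    (α : ℝ) (hα : α = y / ∑ i ∈ Finset.Icc 1 n, max (δ i) 0) :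
    (∀ i ∈ Finset.Icc 1 n, 0 ≤ α * max (δ i) 0) ∧
    ∑ i ∈ Finset.Icc 1 n, α * max (δ i) 0 = y ∧
    α ∈ Set.Ioc (0 : ℝ) 1 ∧
    ∑ i ∈ Finset.Icc 1 n, |α * max (δ i) 0 - δ i| = (∑ i ∈ Finset.Icc 1 n, |δ i|) - y := by
  have hαpos : 0 < α := by rw [hα]; positivity
  have hα1 : α ≤ 1 := by rw [hα]; exact div_le_one_of_le₀ h hpos.le
  have hsum : ∑ i ∈ Finset.Icc 1 n, α * max (δ i) 0 = y := by
    rw [← Finset.mul_sum, hα, div_mul_cancel₀ _ hpos.ne']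
  refine ⟨fun i _ => mul_nonneg hαpos.le (le_max_right _ _), hsum, ⟨hαpos, hα1⟩, ?_⟩
  have key : ∀ i, |α * max (δ i) 0 - δ i| = |δ i| - α * max (δ i) 0 := by
    intro i
    rcases le_or_gt 0 (δ i) with hd | hd
    · rw [max_eq_left hd, abs_of_nonneg hd, abs_of_nonpos (by nlinarith)]; ring
    · rw [max_eq_right hd.le, abs_of_neg hd, mul_zero, zero_sub, abs_neg,
        abs_of_neg hd]; ring
  simp_rw [key, Finset.sum_sub_distrib, hsum]
end

section
/- If 0 < y ≤ Σ_{i=1}^n max(δᵢ, 0), and (y₁,...,yₙ) is a nonnegative vector summing to y with y_j > max(δ_j, 0) for some j, then there exists another nonnegative vector (ỹ₁,...,ỹₙ) summing to y with Σ_{i=1}^n |ỹᵢ - δᵢ| < Σ_{i=1}^n |yᵢ - δᵢ|. -/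
open Finset

/-- If `0 < y ≤ ∑ max(δᵢ,0)` and a nonnegative vector summing to `y` has
`y_j > max(δ_j,0)` for some `j`, then some other nonnegative vector summing to `y` strictly
decreases `∑ |yᵢ - δᵢ|`. -/
theorem stmt11 (n : ℕ) (y : ℝ) (hy : 0 < y) (δ : ℕ → ℝ)
    (h : y ≤ ∑ i ∈ Finset.Icc 1 n, max (δ i) 0)
    (z : ℕ → ℝ) (hpos : ∀ i ∈ Finset.Icc 1 n, 0 ≤ z i)
    (hsum : ∑ i ∈ Finset.Icc 1 n, z i = y)
    (j : ℕ) (hj : j ∈ Finset.Icc 1 n) (hbig : max (δ j) 0 < z j) :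
    ∃ w : ℕ → ℝ, (∀ i ∈ Finset.Icc 1 n, 0 ≤ w i) ∧
      ∑ i ∈ Finset.Icc 1 n, w i = y ∧
      ∑ i ∈ Finset.Icc 1 n, |w i - δ i| < ∑ i ∈ Finset.Icc 1 n, |z i - δ i| := by
  set s := Finset.Icc 1 n with hs
  -- find k with z k < max (δ k) 0
  have hk : ∃ k ∈ s, z k < max (δ k) 0 := by
    by_contra hcon
    push_neg at hcon
    have hlt : ∑ i ∈ s, max (δ i) 0 < ∑ i ∈ s, z i :=
      Finset.sum_lt_sum hcon ⟨j, hj, hbig⟩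
    rw [hsum] at hlt
    linarith
  obtain ⟨k, hkmem, hksmall⟩ := hk
  have hjk : j ≠ k := by
    intro hjk
    subst hjk
    linarith
  have hδk : 0 < δ k := lt_of_le_of_lt (hpos k hkmem) (by
    rcases le_or_gt (δ k) 0 with h1 | h1
    · simp [max_eq_right h1] at hksmall; linarith [hpos k hkmem]
    · rw [max_eq_left h1.le] at hksmall; exact hksmall)
  have hmaxk : max (δ k) 0 = δ k := max_eq_left hδk.le
  rw [hmaxk] at hksmall
  set ε := min (z j - max (δ j) 0) (δ k - z k) with hε
  have hεpos : 0 < ε := lt_min (by linarith) (by linarith)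
  have hε1 : ε ≤ z j - max (δ j) 0 := min_le_left _ _
  have hε2 : ε ≤ δ k - z k := min_le_right _ _
  refine ⟨Function.update (Function.update z j (z j - ε)) k (z k + ε), ?_, ?_, ?_⟩
  · intro i hi
    rcases eq_or_ne i k with rfl | hik
    · simp; linarith [hpos i hi]
    · rcases eq_or_ne i j with rfl | hij
      · simp [Function.update_of_ne hik, le_max_left, le_max_right]
        have : (0:ℝ) ≤ max (δ i) 0 := le_max_right _ _
        linarith
      · simp [Function.update_of_ne hik, Function.update_of_ne hij]
        exact hpos i hi
  · have hjmem' : j ∈ s \ {k} := Finset.mem_sdiff.2 ⟨hj, by simp [hjk]⟩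
    rw [Finset.sum_eq_add_sum_sdiff_singleton_of_mem hkmem,
      Finset.sum_eq_add_sum_sdiff_singleton_of_mem hjmem']
    have h1 : (Function.update (Function.update z j (z j - ε)) k (z k + ε)) k = z k + ε := by
      simp
    have h2 : (Function.update (Function.update z j (z j - ε)) k (z k + ε)) j = z j - ε := by
      simp [Function.update_of_ne hjk]
    rw [h1, h2]
    have h3 : ∑ i ∈ (s \ {k}) \ {j},
        (Function.update (Function.update z j (z j - ε)) k (z k + ε)) i
        = ∑ i ∈ (s \ {k}) \ {j}, z i := by
      apply Finset.sum_congr rfl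
      intro i hi
      simp only [Finset.mem_sdiff, Finset.mem_singleton] at hi
      rw [Function.update_of_ne hi.1.2, Function.update_of_ne hi.2]
    rw [h3, ← hsum, Finset.sum_eq_add_sum_sdiff_singleton_of_mem hkmem,
      Finset.sum_eq_add_sum_sdiff_singleton_of_mem hjmem']
    ring
  · have hjmem' : j ∈ s \ {k} := Finset.mem_sdiff.2 ⟨hj, by simp [hjk]⟩
    rw [Finset.sum_eq_add_sum_sdiff_singleton_of_mem hkmem (f := fun i => |Function.update (Function.update z j (z j - ε)) k (z k + ε) i - δ i|),
      Finset.sum_eq_add_sum_sdiff_singleton_of_mem hjmem' (f := fun i => |Function.update (Function.update z j (z j - ε)) k (z k + ε) i - δ i|),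
      Finset.sum_eq_add_sum_sdiff_singleton_of_mem hkmem (f := fun i => |z i - δ i|),
      Finset.sum_eq_add_sum_sdiff_singleton_of_mem hjmem' (f := fun i => |z i - δ i|)]
    have h3 : ∑ i ∈ (s \ {k}) \ {j},
        |(Function.update (Function.update z j (z j - ε)) k (z k + ε)) i - δ i|
        = ∑ i ∈ (s \ {k}) \ {j}, |z i - δ i| := by
      apply Finset.sum_congr rfl
      intro i hi
      simp only [Finset.mem_sdiff, Finset.mem_singleton] at hi
      rw [Function.update_of_ne hi.1.2, Function.update_of_ne hi.2]
    simp only [Function.update_self, Function.update_of_ne hjk, h3]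
    have hδj : δ j ≤ max (δ j) 0 := le_max_left _ _
    have e1 : |z k + ε - δ k| = δ k - z k - ε := by
      rw [abs_of_nonpos (by linarith)]; ring
    have e2 : |z j - ε - δ j| = z j - ε - δ j := abs_of_nonneg (by linarith)
    have e3 : |z k - δ k| = δ k - z k := by
      rw [abs_of_nonpos (by linarith)]; ring
    have e4 : |z j - δ j| = z j - δ j := abs_of_nonneg (by linarith)
    rw [e1, e2, e3, e4]
    linarith
end

section
/- If y > Σ_{i=1}^n max(δᵢ, 0), and (y₁,...,yₙ) is a nonnegative vector summing to y with y_j < max(δ_j, 0) for some j, then there exists a nonnegative vector (ỹ₁,...,ỹₙ) summing to y with Σ_{i=1}^n |ỹᵢ - δᵢ| < Σ_{i=1}^n |yᵢ - δᵢ|. -/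
open Finset

/-- If `y > ∑ max(δᵢ,0)` and a nonnegative vector summing to `y` has
`y_j < max(δ_j,0)` for some `j`, then some nonnegative vector summing to `y` strictly
decreases `∑ |yᵢ - δᵢ|`. -/
theorem stmt12 (n : ℕ) (y : ℝ) (δ : ℕ → ℝ)
    (h : ∑ i ∈ Finset.Icc 1 n, max (δ i) 0 < y)
    (z : ℕ → ℝ) (hpos : ∀ i ∈ Finset.Icc 1 n, 0 ≤ z i)
    (hsum : ∑ i ∈ Finset.Icc 1 n, z i = y)
    (j : ℕ) (hj : j ∈ Finset.Icc 1 n) (hsmall : z j < max (δ j) 0) :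
    ∃ w : ℕ → ℝ, (∀ i ∈ Finset.Icc 1 n, 0 ≤ w i) ∧
      ∑ i ∈ Finset.Icc 1 n, w i = y ∧
      ∑ i ∈ Finset.Icc 1 n, |w i - δ i| < ∑ i ∈ Finset.Icc 1 n, |z i - δ i| := by
  set s := Finset.Icc 1 n with hs
  obtain ⟨k, hk, hkgt⟩ : ∃ k ∈ s, max (δ k) 0 < z k := by
    by_contra hc
    push_neg at hc
    have : y ≤ ∑ i ∈ s, max (δ i) 0 := by
      rw [← hsum]; exact Finset.sum_le_sum hc
    linarith
  have hjk : j ≠ k := by rintro rfl; linarith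
  have hzj : 0 ≤ z j := hpos j hj
  have hmj : max (δ j) 0 = δ j := by
    rcases max_cases (δ j) 0 with ⟨h1, _⟩ | ⟨h1, _⟩ <;> linarith
  have hmk : δ k ≤ max (δ k) 0 := le_max_left _ _
  have hmk0 : 0 ≤ max (δ k) 0 := le_max_right _ _
  set ε := min (max (δ j) 0 - z j) (z k - max (δ k) 0) with hε
  have hε0 : 0 < ε := lt_min (by linarith) (by linarith)
  have hε1 : ε ≤ max (δ j) 0 - z j := min_le_left _ _
  have hε2 : ε ≤ z k - max (δ k) 0 := min_le_right _ _
  refine ⟨fun i => z i + (if i = j then ε else 0) - (if i = k then ε else 0), ?_, ?_, ?_⟩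
  · intro i hi
    by_cases h1 : i = j
    · subst h1; simp [hjk]; linarith
    · by_cases h2 : i = k
      · subst h2; simp [h1]; linarith
      · simp [h1, h2]; exact hpos i hi
  · simp only [Finset.sum_sub_distrib, Finset.sum_add_distrib,
      Finset.sum_ite_eq' s, hj, hk, if_pos]
    linarith
  · have hkj : k ∈ s.erase j := Finset.mem_erase.2 ⟨Ne.symm hjk, hk⟩
    rw [← Finset.add_sum_erase s _ hj, ← Finset.add_sum_erase (s.erase j) _ hkj,
      ← Finset.add_sum_erase s (fun i => |z i - δ i|) hj,
      ← Finset.add_sum_erase (s.erase j) (fun i => |z i - δ i|) hkj]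
    have heq : ∑ i ∈ (s.erase j).erase k,
        |z i + (if i = j then ε else 0) - (if i = k then ε else 0) - δ i|
        = ∑ i ∈ (s.erase j).erase k, |z i - δ i| := by
      apply Finset.sum_congr rfl
      intro i hi
      have h1 : i ≠ k := (Finset.mem_erase.1 hi).1
      have h2 : i ≠ j := (Finset.mem_erase.1 (Finset.mem_erase.1 hi).2).1
      simp [h1, h2]
    rw [heq]
    have e1 : |z j + (if j = j then ε else 0) - (if j = k then ε else 0) - δ j|
        = δ j - z j - ε := by
      rw [if_pos rfl, if_neg hjk, abs_of_nonpos (by linarith)]; ring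
    have e2 : |z k + (if k = j then ε else 0) - (if k = k then ε else 0) - δ k|
        = z k - ε - δ k := by
      rw [if_pos rfl, if_neg (Ne.symm hjk), abs_of_nonneg (by linarith)]; ring
    have e3 : |z j - δ j| = δ j - z j := by rw [abs_of_nonpos (by linarith)]; ring
    have e4 : |z k - δ k| = z k - δ k := abs_of_nonneg (by linarith)
    rw [e1, e2, e3, e4]
    linarith
end

section
/- With g and κ as defined, g is differentiable at every λ with derivative g'(λ) = -2κ(λ)λ + 2(Σ_{i ≤ κ(λ)} δᵢ - y), including at the points λ = δ_j where κ has jumps. -/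
open Finset

lemma maxsq_deriv (t : ℝ) : HasDerivAt (fun x : ℝ => (max x 0)^2) (2 * max t 0) t := by
  rcases lt_trichotomy t 0 with ht | ht | ht
  · have h1 : (fun x : ℝ => (max x 0)^2) =ᶠ[nhds t] (fun _ : ℝ => (0:ℝ)) := by
      filter_upwards [eventually_lt_nhds ht] with x hx
      simp [max_eq_right hx.le]
    have := (hasDerivAt_const t (0:ℝ)).congr_of_eventuallyEq h1
    simpa [max_eq_right ht.le] using this
  · subst ht
    simp only [max_self, mul_zero]
    rw [hasDerivAt_iff_isLittleO]
    simp only [sub_zero, smul_zero, sub_zero, max_self, ne_eq]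
    rw [Asymptotics.isLittleO_iff]
    intro c hc
    filter_upwards [eventually_abs_sub_lt 0 hc] with x hx
    simp only [sub_zero] at hx
    have h1 : |max x 0| ≤ |x| := by
      rcases le_or_gt x 0 with h | h
      · simp [max_eq_right h, abs_nonneg]
      · simp [max_eq_left h.le]
    calc ‖(max x 0)^2 - (0:ℝ)^2‖ = |max x 0| * |max x 0| := by
            simp [sq, abs_mul]
      _ ≤ |x| * |x| := mul_le_mul h1 h1 (abs_nonneg _) (abs_nonneg _)
      _ ≤ c * |x| := by nlinarith [abs_nonneg x]
      _ = c * ‖x‖ := rfl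
  · have h1 : (fun x : ℝ => (max x 0)^2) =ᶠ[nhds t] (fun x : ℝ => x^2) := by
      filter_upwards [eventually_gt_nhds ht] with x hx
      simp [max_eq_left hx.le]
    have h2 : HasDerivAt (fun x : ℝ => x^2) (2*t) t := by
      simpa using (hasDerivAt_pow 2 t)
    have := h2.congr_of_eventuallyEq h1
    simpa [max_eq_left ht.le] using this

/-- With `κ` and `g` as defined, `g` is differentiable at every `λ ∈ ℝ` with
derivative `g'(λ) = -2κ(λ)λ + 2(∑_{i ≤ κ(λ)} δᵢ - y)`, including at the jump points
`λ = δ_j`. -/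
theorem stmt16 (n : ℕ) (y : ℝ) (hy : 0 < y) (δ : ℕ → ℝ)
    (hδ : ∀ i j, 1 ≤ i → i ≤ j → j ≤ n → δ j ≤ δ i)
    (κ : ℝ → ℕ) (hκ : ∀ l, κ l = ((Finset.Icc 1 n).filter (fun i => l < δ i)).card)
    (g : ℝ → ℝ)
    (hg : ∀ l, g l = -(κ l : ℝ) * l ^ 2 +
        2 * l * ((∑ i ∈ Finset.Icc 1 (κ l), δ i) - y) +
        ∑ i ∈ Finset.Icc (κ l + 1) n, (δ i) ^ 2) :
    ∀ l : ℝ, HasDerivAt g (-2 * (κ l : ℝ) * l + 2 * ((∑ i ∈ Finset.Icc 1 (κ l), δ i) - y)) l := by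
  have hfilter : ∀ m : ℝ, (Finset.Icc 1 n).filter (fun i => m < δ i) = Finset.Icc 1 (κ m) := by
    intro m
    have hsub : (Finset.Icc 1 n).filter (fun i => m < δ i) ⊆ Finset.Icc 1 (κ m) := by
      intro i hi
      simp only [mem_filter, mem_Icc] at hi
      obtain ⟨⟨h1, h2⟩, h3⟩ := hi
      have hss : Finset.Icc 1 i ⊆ (Finset.Icc 1 n).filter (fun j => m < δ j) := by
        intro j hj
        simp only [mem_Icc] at hj
        simp only [mem_filter, mem_Icc]
        exact ⟨⟨hj.1, hj.2.trans h2⟩, lt_of_lt_of_le h3 (hδ j i hj.1 hj.2 h2)⟩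
      have hc := Finset.card_le_card hss
      rw [Nat.card_Icc] at hc
      rw [mem_Icc, hκ m]
      omega
    have hcard : (Finset.Icc 1 (κ m)).card ≤ ((Finset.Icc 1 n).filter (fun i => m < δ i)).card := by
      rw [Nat.card_Icc, hκ m]; omega
    exact (Finset.eq_of_subset_of_card_le hsub hcard).symm.symm
  have hfilter' : ∀ m : ℝ, (Finset.Icc 1 n).filter (fun i => ¬ m < δ i) = Finset.Icc (κ m + 1) n := by
    intro m
    ext i
    have h1 := hfilter m
    constructor
    · intro hi
      simp only [mem_filter, mem_Icc] at hi
      have : i ∉ Finset.Icc 1 (κ m) := by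
        rw [← h1]; simp only [mem_filter]; tauto
      simp only [mem_Icc] at this ⊢
      omega
    · intro hi
      simp only [mem_Icc] at hi
      have h2 : i ∉ Finset.Icc 1 (κ m) := by
        simp only [mem_Icc]; omega
      rw [← h1] at h2
      simp only [mem_filter, mem_Icc] at h2 ⊢
      constructor
      · omega
      · intro hlt
        exact h2 ⟨⟨by omega, hi.2⟩, hlt⟩
  set C : ℝ := ∑ i ∈ Finset.Icc 1 n, (δ i)^2 with hC
  have hsplit : ∀ (f : ℕ → ℝ) (m : ℝ), ∑ i ∈ Finset.Icc 1 n, f i =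
      (∑ i ∈ Finset.Icc 1 (κ m), f i) + ∑ i ∈ Finset.Icc (κ m + 1) n, f i := by
    intro f m
    rw [← hfilter m, ← hfilter' m]
    exact (Finset.sum_filter_add_sum_filter_not _ _ _).symm
  have hmemle : ∀ (m : ℝ) i, i ∈ Finset.Icc 1 (κ m) → m < δ i := by
    intro m i hi
    rw [← hfilter m] at hi
    exact (Finset.mem_filter.mp hi).2
  have hmemgt : ∀ (m : ℝ) i, i ∈ Finset.Icc (κ m + 1) n → δ i ≤ m := by
    intro m i hi
    rw [← hfilter' m] at hi
    exact not_lt.mp (Finset.mem_filter.mp hi).2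
  have hg2 : ∀ m : ℝ, g m = C - (∑ i ∈ Finset.Icc 1 n, (max (δ i - m) 0)^2) - 2*m*y := by
    intro m
    rw [hg m, hC, hsplit (fun i => (δ i)^2) m, hsplit (fun i => (max (δ i - m) 0)^2) m]
    have e1 : ∑ i ∈ Finset.Icc 1 (κ m), (max (δ i - m) 0)^2
        = ∑ i ∈ Finset.Icc 1 (κ m), ((δ i)^2 - 2*m*δ i + m^2) := by
      apply Finset.sum_congr rfl
      intro i hi
      rw [max_eq_left (by linarith [hmemle m i hi])]
      ring
    have e2 : ∑ i ∈ Finset.Icc (κ m + 1) n, (max (δ i - m) 0)^2 = 0 := by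
      apply Finset.sum_eq_zero
      intro i hi
      rw [max_eq_right (by linarith [hmemgt m i hi])]
      ring
    rw [e1, e2, Finset.sum_add_distrib, Finset.sum_sub_distrib, Finset.sum_const,
      Nat.card_Icc, ← Finset.mul_sum]
    simp only [Nat.add_sub_cancel, nsmul_eq_mul]
    ring
  intro l
  have hd : ∀ i ∈ Finset.Icc 1 n, HasDerivAt (fun m : ℝ => (max (δ i - m) 0)^2)
      (2 * max (δ i - l) 0 * (-1)) l := by
    intro i _
    have h1 : HasDerivAt (fun m : ℝ => δ i - m) (-1) l := by
      simpa using (hasDerivAt_const l (δ i)).fun_sub (hasDerivAt_id l)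
    exact (maxsq_deriv (δ i - l)).comp l h1
  have hsum : HasDerivAt (fun m : ℝ => ∑ i ∈ Finset.Icc 1 n, (max (δ i - m) 0)^2)
      (∑ i ∈ Finset.Icc 1 n, 2 * max (δ i - l) 0 * (-1)) l := HasDerivAt.fun_sum hd
  have hG : HasDerivAt (fun m : ℝ => C - (∑ i ∈ Finset.Icc 1 n, (max (δ i - m) 0)^2) - 2*m*y)
      (0 - (∑ i ∈ Finset.Icc 1 n, 2 * max (δ i - l) 0 * (-1)) - 2*y) l := by
    have h2 : HasDerivAt (fun m : ℝ => 2*m*y) (2*y) l := by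
      have := (hasDerivAt_id l).const_mul (2:ℝ)
      have := this.mul_const y
      simpa using this
    exact ((hasDerivAt_const l C).sub hsum).sub h2
  have hval : (0 : ℝ) - (∑ i ∈ Finset.Icc 1 n, 2 * max (δ i - l) 0 * (-1)) - 2*y
      = -2 * (κ l : ℝ) * l + 2 * ((∑ i ∈ Finset.Icc 1 (κ l), δ i) - y) := by
    rw [hsplit (fun i => 2 * max (δ i - l) 0 * (-1)) l]
    have e1 : ∑ i ∈ Finset.Icc 1 (κ l), 2 * max (δ i - l) 0 * (-1)
        = ∑ i ∈ Finset.Icc 1 (κ l), (2*l - 2*δ i) := by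
      apply Finset.sum_congr rfl
      intro i hi
      rw [max_eq_left (by linarith [hmemle l i hi])]
      ring
    have e2 : ∑ i ∈ Finset.Icc (κ l + 1) n, 2 * max (δ i - l) 0 * (-1) = 0 := by
      apply Finset.sum_eq_zero
      intro i hi
      rw [max_eq_right (by linarith [hmemgt l i hi])]
      ring
    rw [e1, e2, Finset.sum_sub_distrib, Finset.sum_const, Nat.card_Icc, ← Finset.mul_sum]
    simp only [Nat.add_sub_cancel, nsmul_eq_mul]
    ring
  rw [← hval]
  exact hG.congr_of_eventuallyEq (Filter.Eventually.of_forall hg2)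
end

section
/- The minimum value of Σ_{i=1}^n (yᵢ - δᵢ)² over nonnegative vectors summing to y equals k*(λ*)² + Σ_{i=k*+1}^n δᵢ², where λ* = (Σ_{i=1}^{k*} δᵢ - y)/k* and k* is the largest k with Σ_{i=1}^k (δᵢ - δ_k) < y. -/
open Finset

/-- The minimum of `∑ (yᵢ - δᵢ)²` over nonnegative vectors summing to `y`
equals `k*(λ*)² + ∑_{i=k*+1}^n δᵢ²`. -/
theorem stmt17 (n : ℕ) (hn : 1 ≤ n) (y : ℝ) (hy : 0 < y) (δ : ℕ → ℝ)
    (hδ : ∀ i j, 1 ≤ i → i ≤ j → j ≤ n → δ j ≤ δ i)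
    (kstar : ℕ)
    (hk : (kstar ∈ Finset.Icc 1 n ∧ ∑ i ∈ Finset.Icc 1 kstar, (δ i - δ kstar) < y) ∧
      ∀ j, (j ∈ Finset.Icc 1 n ∧ ∑ i ∈ Finset.Icc 1 j, (δ i - δ j) < y) → j ≤ kstar)
    (lstar : ℝ) (hl : lstar = ((∑ i ∈ Finset.Icc 1 kstar, δ i) - y) / kstar) :
    IsLeast {s : ℝ | ∃ z : ℕ → ℝ, (∀ i ∈ Finset.Icc 1 n, 0 ≤ z i) ∧
        ∑ i ∈ Finset.Icc 1 n, z i = y ∧ s = ∑ i ∈ Finset.Icc 1 n, (z i - δ i) ^ 2}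
      ((kstar : ℝ) * lstar ^ 2 + ∑ i ∈ Finset.Icc (kstar + 1) n, (δ i) ^ 2) := by
  obtain ⟨⟨hkmem, hksum⟩, hkmax⟩ := hk
  rw [Finset.mem_Icc] at hkmem
  obtain ⟨hk1, hkn⟩ := hkmem
  have hK0 : (0:ℝ) < kstar := by exact_mod_cast hk1
  set S : ℝ := ∑ i ∈ Finset.Icc 1 kstar, δ i with hS
  -- sum splitting
  have split : ∀ f : ℕ → ℝ, ∑ i ∈ Finset.Icc 1 n, f i
      = ∑ i ∈ Finset.Icc 1 kstar, f i + ∑ i ∈ Finset.Icc (kstar+1) n, f i := by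
    intro f
    rw [show Finset.Icc 1 n = Finset.Ioc 0 n from Finset.Icc_add_one_left_eq_Ioc 0 n,
      show Finset.Icc 1 kstar = Finset.Ioc 0 kstar from Finset.Icc_add_one_left_eq_Ioc 0 kstar,
      show Finset.Icc (kstar+1) n = Finset.Ioc kstar n from Finset.Icc_add_one_left_eq_Ioc kstar n]
    exact (Finset.sum_Ioc_consecutive f (Nat.zero_le kstar) hkn).symm
  have hcard : ((Finset.Icc 1 kstar).card : ℝ) = (kstar : ℝ) := by
    rw [Nat.card_Icc]; push_cast; ring
  -- S - kstar * δ kstar < y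
  have hsum' : S - (kstar : ℝ) * δ kstar < y := by
    have := hksum
    rw [Finset.sum_sub_distrib, Finset.sum_const, nsmul_eq_mul] at this
    rw [hcard] at this
    linarith
  have hlt : lstar < δ kstar := by
    rw [hl, div_lt_iff₀ hK0]
    linarith
  -- S - kstar * lstar = y
  have hKy : S - (kstar : ℝ) * lstar = y := by
    rw [hl]; field_simp; ring
  -- upper bound on tail deltas
  have hub : ∀ i, kstar + 1 ≤ i → i ≤ n → δ i ≤ lstar := by
    intro i hi1 hi2
    have hk1n : kstar + 1 ≤ n := le_trans hi1 hi2
    have hnot : ¬ ((kstar + 1) ∈ Finset.Icc 1 n ∧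
        ∑ j ∈ Finset.Icc 1 (kstar+1), (δ j - δ (kstar + 1)) < y) := by
      intro h
      exact absurd (hkmax _ h) (by omega)
    have hmem : (kstar + 1) ∈ Finset.Icc 1 n := Finset.mem_Icc.mpr ⟨by omega, hk1n⟩
    have hge : y ≤ ∑ j ∈ Finset.Icc 1 (kstar+1), (δ j - δ (kstar + 1)) := by
      by_contra h
      exact hnot ⟨hmem, by linarith⟩
    rw [Finset.sum_Icc_succ_top (by omega : 1 ≤ kstar + 1)] at hge
    rw [Finset.sum_sub_distrib, Finset.sum_const, nsmul_eq_mul, hcard] at hge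
    have h1 : δ (kstar + 1) ≤ lstar := by
      rw [hl, le_div_iff₀ hK0]
      linarith
    have h2 : δ i ≤ δ (kstar + 1) := hδ (kstar + 1) i (by omega) hi1 hi2
    linarith
  constructor
  · -- membership: witness z
    refine ⟨fun i => if i ≤ kstar then δ i - lstar else 0, ?_, ?_, ?_⟩
    · intro i hi
      rw [Finset.mem_Icc] at hi
      by_cases h : i ≤ kstar
      · simp only [if_pos h]
        have := hδ i kstar hi.1 h hkn
        linarith
      · simp only [if_neg h]; exact le_refl 0
    · rw [split]
      have e1 : ∑ i ∈ Finset.Icc 1 kstar, (if i ≤ kstar then δ i - lstar else 0) = S - kstar * lstar := by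
        rw [Finset.sum_congr rfl (fun i hi => if_pos (Finset.mem_Icc.mp hi).2)]
        rw [Finset.sum_sub_distrib, Finset.sum_const, nsmul_eq_mul, hcard]
      have e2 : ∑ i ∈ Finset.Icc (kstar+1) n, (if i ≤ kstar then δ i - lstar else 0) = 0 := by
        refine Finset.sum_eq_zero fun i hi => ?_
        have := (Finset.mem_Icc.mp hi).1
        rw [if_neg (by omega)]
      rw [e1, e2, hKy]; ring
    · rw [split]
      have e1 : ∑ i ∈ Finset.Icc 1 kstar, ((if i ≤ kstar then δ i - lstar else 0) - δ i)^2
          = (kstar : ℝ) * lstar ^ 2 := by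
        have e : ∀ i ∈ Finset.Icc 1 kstar,
            ((if i ≤ kstar then δ i - lstar else 0) - δ i)^2 = lstar^2 := by
          intro i hi; rw [if_pos (Finset.mem_Icc.mp hi).2]; ring
        rw [Finset.sum_congr rfl e, Finset.sum_const, nsmul_eq_mul, hcard]
      have e2 : ∑ i ∈ Finset.Icc (kstar+1) n, ((if i ≤ kstar then δ i - lstar else 0) - δ i)^2
          = ∑ i ∈ Finset.Icc (kstar+1) n, (δ i)^2 := by
        refine Finset.sum_congr rfl fun i hi => ?_
        have := (Finset.mem_Icc.mp hi).1
        rw [if_neg (by omega)]; ring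
      rw [e1, e2]
  · -- lower bound
    rintro s ⟨z, hz0, hzsum, rfl⟩
    set A : ℝ := ∑ i ∈ Finset.Icc 1 kstar, z i with hA
    set B : ℝ := ∑ i ∈ Finset.Icc (kstar+1) n, z i with hB
    have hAB : A + B = y := by rw [hA, hB, ← split]; exact hzsum
    have h1 : (kstar : ℝ) * lstar^2 + 2*lstar*B ≤ ∑ i ∈ Finset.Icc 1 kstar, (z i - δ i)^2 := by
      have pw : ∀ i ∈ Finset.Icc 1 kstar, lstar^2 - 2*lstar*(z i - δ i + lstar) ≤ (z i - δ i)^2 := by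
        intro i _
        nlinarith [sq_nonneg (z i - δ i + lstar)]
      have hsg : ∑ i ∈ Finset.Icc 1 kstar, (lstar^2 - 2*lstar*(z i - δ i + lstar))
          = (kstar : ℝ) * lstar^2 + 2*lstar*B := by
        rw [Finset.sum_sub_distrib, ← Finset.mul_sum, Finset.sum_add_distrib,
          Finset.sum_sub_distrib, Finset.sum_const, Finset.sum_const, nsmul_eq_mul,
          nsmul_eq_mul, hcard, ← hA, ← hS]
        have : A = y - B := by linarith
        rw [this]
        linear_combination 2*lstar*hKy
      calc (kstar : ℝ) * lstar^2 + 2*lstar*B = _ := hsg.symm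
        _ ≤ _ := Finset.sum_le_sum pw
    have h2 : (∑ i ∈ Finset.Icc (kstar+1) n, (δ i)^2) - 2*lstar*B
        ≤ ∑ i ∈ Finset.Icc (kstar+1) n, (z i - δ i)^2 := by
      have pw : ∀ i ∈ Finset.Icc (kstar+1) n, (δ i)^2 - 2*lstar*(z i) ≤ (z i - δ i)^2 := by
        intro i hi
        rw [Finset.mem_Icc] at hi
        have hzi : 0 ≤ z i := hz0 i (Finset.mem_Icc.mpr ⟨by omega, hi.2⟩)
        have hdi : δ i ≤ lstar := hub i hi.1 hi.2
        nlinarith [sq_nonneg (z i)]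
      have hsg : ∑ i ∈ Finset.Icc (kstar+1) n, ((δ i)^2 - 2*lstar*(z i))
          = (∑ i ∈ Finset.Icc (kstar+1) n, (δ i)^2) - 2*lstar*B := by
        rw [Finset.sum_sub_distrib, ← Finset.mul_sum, ← hB]
      calc _ = _ := hsg.symm
        _ ≤ _ := Finset.sum_le_sum pw
    rw [split]
    linarith
end
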